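/- Let n and d be nonnegative integers with n ≥ d, F a field, and S a right End(F^d)-set. Define the presheaf G = i_d S on finite-dimensional F-vector spaces by G(V) = S ×_{End(F^d)} Hom(V, F^d). Then the canonical surjection G → β_{≤n} G is an isomorphism; i.e., if two elements of G(V) agree after restriction along every linear map F^n → V, then they are equal. -/

import Mathlib

/-- The balanced-product relation defining `i_d S (W) = S ×_{End(F^d)} Hom(W, F^d)`:
`(s·m, f) ∼ (s, m ∘ f)`. -/
def iRel (F : Type) [Field F] (d : ℕ) (S : Type)
    (act : S → ((Fin d → F) →ₗ[F] (Fin d → F)) → S)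
    (W : Type) [AddCommGroup W] [Module F W] :
    (S × (W →ₗ[F] (Fin d → F))) → (S × (W →ₗ[F] (Fin d → F))) → Prop :=
  fun a b => ∃ (s : S) (m : (Fin d → F) →ₗ[F] (Fin d → F)) (f : W →ₗ[F] (Fin d → F)),
    a = (act s m, f) ∧ b = (s, m ∘ₗ f)

/-- Restriction of `i_d S` along a linear map `k : F^n → V`, well defined on the
balanced product. -/
def iRes (F : Type) [Field F] (d n : ℕ) (S : Type)
    (act : S → ((Fin d → F) →ₗ[F] (Fin d → F)) → S)
    (V : Type) [AddCommGroup V] [Module F V]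
    (k : (Fin n → F) →ₗ[F] V) :
    Quot (iRel F d S act V) → Quot (iRel F d S act (Fin n → F)) :=
  Quot.lift (fun a => Quot.mk _ (a.1, a.2 ∘ₗ k)) (by
    rintro a b ⟨s, m, f, ha, hb⟩
    subst ha; subst hb
    apply Quot.sound
    exact ⟨s, m, f ∘ₗ k, rfl, by rw [LinearMap.comp_assoc]⟩)

open Module Submodule

/-- Restriction of `i_d S` along an arbitrary linear map `W₁ → W₂`. -/
def myRes (F : Type) [Field F] (d : ℕ) (S : Type)
    (act : S → ((Fin d → F) →ₗ[F] (Fin d → F)) → S)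
    (W₁ W₂ : Type) [AddCommGroup W₁] [Module F W₁] [AddCommGroup W₂] [Module F W₂]
    (r : W₁ →ₗ[F] W₂) :
    Quot (iRel F d S act W₂) → Quot (iRel F d S act W₁) :=
  Quot.lift (fun a => Quot.mk _ (a.1, a.2 ∘ₗ r)) (by
    rintro a b ⟨s, m, f, ha, hb⟩
    subst ha; subst hb
    apply Quot.sound
    exact ⟨s, m, f ∘ₗ r, rfl, by rw [LinearMap.comp_assoc]⟩)

/-- Any endomorphism of rank `≤ n` factors through `F^n`. -/
theorem exists_factor (F : Type) [Field F] (n : ℕ) (V : Type) [AddCommGroup V] [Module F V]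
    [FiniteDimensional F V] (φ : V →ₗ[F] V)
    (hφ : finrank F (LinearMap.range φ) ≤ n) :
    ∃ (k : (Fin n → F) →ₗ[F] V) (r : V →ₗ[F] (Fin n → F)), k ∘ₗ r = φ := by
  set R := LinearMap.range φ with hR
  set m := finrank F R with hm
  let e : R ≃ₗ[F] (Fin m → F) := (finBasis F R).equivFun
  let u : (Fin m → F) →ₗ[F] (Fin n → F) :=
    LinearMap.pi (fun i : Fin n => if h : (i : ℕ) < m then LinearMap.proj ⟨i, h⟩ else 0)
  let v : (Fin n → F) →ₗ[F] (Fin m → F) := LinearMap.funLeft F F (Fin.castLE hφ)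
  refine ⟨R.subtype ∘ₗ e.symm.toLinearMap ∘ₗ v, u ∘ₗ e.toLinearMap ∘ₗ φ.rangeRestrict, ?_⟩
  ext x
  have hvu : ∀ y : Fin m → F, v (u y) = y := by
    intro y; funext j
    simp only [v, u, LinearMap.funLeft_apply, LinearMap.pi_apply]
    have hj : ((Fin.castLE hφ j : Fin n) : ℕ) < m := j.isLt
    rw [dif_pos hj]
    simp
  simp [hvu]

/-- The key linear-algebra construction: compatible projections `p`, `q` of rank `≤ d`
with `f ∘ p = f`, `g ∘ q = g` and `g ∘ p ∘ q = g ∘ p`. -/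
theorem exists_projs (F : Type) [Field F] (d : ℕ) (V : Type) [AddCommGroup V] [Module F V]
    [FiniteDimensional F V] (f g : V →ₗ[F] (Fin d → F)) :
    ∃ p q : V →ₗ[F] V,
      f ∘ₗ p = f ∧ g ∘ₗ q = g ∧
      finrank F (LinearMap.range p) ≤ d ∧ finrank F (LinearMap.range q) ≤ d ∧
      g ∘ₗ (p ∘ₗ q) = g ∘ₗ p := by
  classical
  set Kf := LinearMap.ker f with hKf
  set Kg := LinearMap.ker g with hKg
  obtain ⟨B', hB'⟩ := Submodule.exists_isCompl ((Kf ⊓ Kg).comap Kg.subtype)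
  set B : Submodule F V := B'.map Kg.subtype with hB
  have hBKg : B ≤ Kg := Submodule.map_subtype_le _ _
  have hBKf : ∀ x : V, x ∈ B → x ∈ Kf → x = 0 := by
    intro x hxB hxKf
    have hxKg : x ∈ Kg := hBKg hxB
    obtain ⟨y, hyB', hyx⟩ := hxB
    have hyN : y ∈ (Kf ⊓ Kg).comap Kg.subtype := by
      simp only [Submodule.mem_comap]
      exact ⟨hyx ▸ hxKf, hyx ▸ hxKg⟩
    have hy0 : y = 0 := by
      have := hB'.inf_eq_bot ▸ (Submodule.mem_inf.2 ⟨hyN, hyB'⟩)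
      simpa using this
    simp [← hyx, hy0]
  obtain ⟨D, hD⟩ := Submodule.exists_isCompl (Kf ⊔ B)
  set C : Submodule F V := B ⊔ D with hC
  have hcompl : IsCompl Kf C := by
    constructor
    · rw [disjoint_iff]
      ext x
      simp only [Submodule.mem_inf, Submodule.mem_bot]
      constructor
      · rintro ⟨hxKf, hxC⟩
        obtain ⟨b, hb, w, hw, hbw⟩ := Submodule.mem_sup.1 hxC
        have hwx : w = x - b := by rw [← hbw]; abel
        have hwmem : w ∈ (Kf ⊔ B) ⊓ D := by
          refine Submodule.mem_inf.2 ⟨?_, hw⟩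
          rw [hwx]
          exact Submodule.sub_mem _ (Submodule.mem_sup_left hxKf) (Submodule.mem_sup_right hb)
        have hw0 : w = 0 := by
          have := hD.inf_eq_bot ▸ hwmem
          simpa using this
        have hxb : x = b := by rw [← hbw, hw0, add_zero]
        exact hxb ▸ hBKf b hb (hxb ▸ hxKf)
      · rintro rfl; exact ⟨Submodule.zero_mem _, Submodule.zero_mem _⟩
    · rw [codisjoint_iff, hC, ← sup_assoc]
      exact hD.sup_eq_top
  obtain ⟨Cg, hCg⟩ := Submodule.exists_isCompl Kg
  set p : V →ₗ[F] V := C.subtype ∘ₗ (Submodule.linearProjOfIsCompl C Kf hcompl.symm) with hp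
  set q : V →ₗ[F] V := Cg.subtype ∘ₗ (Submodule.linearProjOfIsCompl Cg Kg hCg.symm) with hq
  have hpsub : ∀ v : V, v - p v ∈ Kf := by
    intro v
    have h2 := Submodule.projection_add_projection_eq_self hcompl v
    have h3 : v - p v = ((Kf.linearProjOfIsCompl C hcompl) v : V) := sub_eq_of_eq_add h2.symm
    rw [h3]; exact Submodule.coe_mem _
  have hqsub : ∀ v : V, v - q v ∈ Kg := by
    intro v
    have h2 := Submodule.projection_add_projection_eq_self hCg v
    have h3 : v - q v = ((Kg.linearProjOfIsCompl Cg hCg) v : V) := sub_eq_of_eq_add h2.symm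
    rw [h3]; exact Submodule.coe_mem _
  have hpC : ∀ v : V, v ∈ C → p v = v := by
    intro v hv
    show (↑((Submodule.projectionOnto C Kf hcompl.symm) v) : V) = v
    rw [Submodule.projectionOnto_apply_of_mem_left hcompl.symm hv]
  have hpKf : ∀ v : V, v ∈ Kf → p v = 0 := by
    intro v hv
    show (↑((Submodule.projectionOnto C Kf hcompl.symm) v) : V) = 0
    rw [Submodule.projectionOnto_apply_of_mem_right hcompl.symm hv]
    rfl
  have hpKg : ∀ v : V, v ∈ Kg → p v ∈ Kg := by
    intro v hv
    have h2 := Submodule.projection_add_projection_eq_self hB' ⟨v, hv⟩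
    set y1 := ((Kf ⊓ Kg).comap Kg.subtype).projectionOnto B' hB' ⟨v, hv⟩ with hy1
    set y2 := B'.projectionOnto ((Kf ⊓ Kg).comap Kg.subtype) hB'.symm ⟨v, hv⟩ with hy2
    have hsplit : ((y1 : Kg) : V) + ((y2 : Kg) : V) = v := by
      have := congrArg (fun z : Kg => (z : V)) h2
      exact this
    have hy1Kf : ((y1 : Kg) : V) ∈ Kf := (Submodule.mem_inf.1 (Submodule.mem_comap.1 y1.2)).1
    have hy2B : ((y2 : Kg) : V) ∈ B := ⟨(y2 : Kg), y2.2, rfl⟩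
    have hy2C : ((y2 : Kg) : V) ∈ C := Submodule.mem_sup_left hy2B
    have hpv : p v = ((y2 : Kg) : V) := by
      rw [← hsplit, map_add, hpKf _ hy1Kf, hpC _ hy2C, zero_add]
    rw [hpv]; exact hBKg hy2B
  refine ⟨p, q, ?_, ?_, ?_, ?_, ?_⟩
  · apply LinearMap.ext; intro v
    simp only [LinearMap.comp_apply]
    have h0 : f (v - p v) = 0 := hpsub v
    rw [map_sub, sub_eq_zero] at h0
    exact h0.symm
  · apply LinearMap.ext; intro v
    simp only [LinearMap.comp_apply]
    have h0 : g (v - q v) = 0 := hqsub v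
    rw [map_sub, sub_eq_zero] at h0
    exact h0.symm
  · have hr : LinearMap.range p ≤ C := by
      rintro x ⟨v, rfl⟩
      exact Submodule.coe_mem _
    have e1 : finrank F Kf + finrank F C = finrank F V :=
      Submodule.finrank_add_eq_of_isCompl hcompl
    have e2 : finrank F (LinearMap.range f) + finrank F Kf = finrank F V :=
      LinearMap.finrank_range_add_finrank_ker f
    have e3 : finrank F (LinearMap.range f) ≤ d := by
      simpa [Module.finrank_fin_fun] using (LinearMap.range f).finrank_le
    have e4 : finrank F (LinearMap.range p) ≤ finrank F C := Submodule.finrank_mono hr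
    omega
  · have hr : LinearMap.range q ≤ Cg := by
      rintro x ⟨v, rfl⟩
      exact Submodule.coe_mem _
    have e1 : finrank F Kg + finrank F Cg = finrank F V :=
      Submodule.finrank_add_eq_of_isCompl hCg
    have e2 : finrank F (LinearMap.range g) + finrank F Kg = finrank F V :=
      LinearMap.finrank_range_add_finrank_ker g
    have e3 : finrank F (LinearMap.range g) ≤ d := by
      simpa [Module.finrank_fin_fun] using (LinearMap.range g).finrank_le
    have e4 : finrank F (LinearMap.range q) ≤ finrank F Cg := Submodule.finrank_mono hr
    omega
  · apply LinearMap.ext; intro v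
    simp only [LinearMap.comp_apply]
    have h0 : q v - v ∈ Kg := by
      have := Submodule.neg_mem Kg (hqsub v)
      simpa using this
    have h1 : p (q v) - p v ∈ Kg := by
      rw [← map_sub]
      exact hpKg _ h0
    have h3 : g (p (q v) - p v) = 0 := h1
    rw [map_sub, sub_eq_zero] at h3
    exact h3

/-- For `n ≥ d`, the canonical surjection `i_d S → β_{≤n} (i_d S)` is an
isomorphism: two elements of `i_d S (V)` which agree after restriction along
every linear map `F^n → V` are equal. -/
theorem idS_betaLe_iso (F : Type) [Field F] (d n : ℕ) (hdn : d ≤ n)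
    (S : Type) (act : S → ((Fin d → F) →ₗ[F] (Fin d → F)) → S)
    (h_one : ∀ s, act s LinearMap.id = s)
    (h_mul : ∀ s m₁ m₂, act s (m₁ ∘ₗ m₂) = act (act s m₁) m₂)
    (V : Type) [AddCommGroup V] [Module F V] [FiniteDimensional F V]
    (a b : Quot (iRel F d S act V))
    (h : ∀ k : (Fin n → F) →ₗ[F] V,
      iRes F d n S act V k a = iRes F d n S act V k b) :
    a = b := by
  obtain ⟨⟨s, f⟩, ha⟩ := Quot.exists_rep a
  obtain ⟨⟨t, g⟩, hb⟩ := Quot.exists_rep b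
  obtain ⟨p, q, hfp, hgq, hrp, hrq, hgpq⟩ := exists_projs F d V f g
  obtain ⟨kf, rf, hkrf⟩ := exists_factor F n V p (hrp.trans hdn)
  obtain ⟨kg, rg, hkrg⟩ := exists_factor F n V q (hrq.trans hdn)
  have step1 : a = Quot.mk (iRel F d S act V) (t, g ∘ₗ p) := by
    have h1 : myRes F d S act V (Fin n → F) rf (iRes F d n S act V kf a) = a := by
      rw [← ha]
      show Quot.mk _ (s, (f ∘ₗ kf) ∘ₗ rf) = Quot.mk _ (s, f)
      rw [LinearMap.comp_assoc, hkrf, hfp]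
    have h2 : myRes F d S act V (Fin n → F) rf (iRes F d n S act V kf b) =
        Quot.mk (iRel F d S act V) (t, g ∘ₗ p) := by
      rw [← hb]
      show Quot.mk _ (t, (g ∘ₗ kf) ∘ₗ rf) = _
      rw [LinearMap.comp_assoc, hkrf]
    rw [← h1, h kf, h2]
  have step2 : myRes F d S act V (Fin n → F) rg (iRes F d n S act V kg a) =
      Quot.mk (iRel F d S act V) (t, g ∘ₗ p) := by
    rw [step1]
    show Quot.mk _ (t, ((g ∘ₗ p) ∘ₗ kg) ∘ₗ rg) = _
    rw [LinearMap.comp_assoc, hkrg, LinearMap.comp_assoc, hgpq]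
  have step3 : myRes F d S act V (Fin n → F) rg (iRes F d n S act V kg b) = b := by
    rw [← hb]
    show Quot.mk _ (t, (g ∘ₗ kg) ∘ₗ rg) = Quot.mk _ (t, g)
    rw [LinearMap.comp_assoc, hkrg, hgq]
  rw [step1, ← step2, h kg, step3]
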